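/- Let X be a real Hilbert space, let m ≥ 2, and for each i ∈ {1,…,m} let T_i : X → X be firmly nonexpansive. For each cyclic shift k ∈ {0,1,…,m−1}, let u_k denote the minimal displacement vector of the composition T_{σ^k(m)} T_{σ^k(m−1)} ⋯ T_{σ^k(1)}, where σ is the cyclic permutation sending i to i−1 modulo m (so u_0 corresponds to T_m T_{m−1} ⋯ T_1, u_1 to T_{m−1} ⋯ T_1 T_m, etc.). Then u_0 = u_1 = ⋯ = u_{m−1}. -/

import Mathlib

set_option maxHeartbeats 1000000

/-- Composition `T (m-1) ∘ ⋯ ∘ T 1 ∘ T 0` applied to `x` (apply `T 0` first),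
so that with `T i` playing the role of `T_{i+1}` this is `T_m T_{m-1} ⋯ T_1 x`. -/
def compSeq {X : Type*} (m : ℕ) (T : Fin m → X → X) : X → X :=
  fun x => (List.ofFn T).foldl (fun y f => f y) x

/-- The `k`-fold cyclically shifted composition: for `k = 0` this is
`T_m T_{m-1} ⋯ T_1`, for `k = 1` it is `T_{m-1} ⋯ T_1 T_m`, etc. -/
def shiftComp {X : Type*} (m : ℕ) (T : Fin m → X → X) (k : Fin m) : X → X :=
  compSeq m (fun j => T (j - k))

open scoped Fin.CommRing Fin.NatCast

/-- A firmly nonexpansive map is nonexpansive. -/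
lemma firm_nonexp {X : Type*} [NormedAddCommGroup X] [InnerProductSpace ℝ X] (f : X → X)
    (h : ∀ x y : X, ‖f x - f y‖^2 ≤ (inner ℝ (x-y) (f x - f y) : ℝ)) :
    ∀ x y : X, ‖f x - f y‖ ≤ ‖x - y‖ := by
  intro x y
  have h1 := h x y
  have h2 := real_inner_le_norm (x - y) (f x - f y)
  by_contra hc
  push_neg at hc
  nlinarith [norm_nonneg (f x - f y), norm_nonneg (x - y)]

/-- A fold of nonexpansive maps is nonexpansive. -/
lemma foldl_nonexp {X : Type*} [NormedAddCommGroup X] (l : List (X → X))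
    (h : ∀ f ∈ l, ∀ x y : X, ‖f x - f y‖ ≤ ‖x - y‖) :
    ∀ x y : X, ‖l.foldl (fun y f => f y) x - l.foldl (fun y f => f y) y‖ ≤ ‖x - y‖ := by
  induction l with
  | nil => simp
  | cons f l ih =>
    intro x y
    simp only [List.foldl_cons]
    exact (ih (fun g hg => h g (List.mem_cons_of_mem _ hg)) (f x) (f y)).trans
      (h f List.mem_cons_self x y)

/-- Decomposition of consecutive cyclic shifts: `S_k = B ∘ R` and `S_{k+1} = R ∘ B`, where
`B = T (-(k+1))`. -/
lemma shiftComp_decomp {X : Type*} (n : ℕ) (T : Fin (n+1) → X → X) (k : Fin (n+1)) :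
    (∀ x, shiftComp (n+1) T k x =
      T (0 - (k+1)) ((List.ofFn (fun i : Fin n => T (i.castSucc - k))).foldl (fun y f => f y) x)) ∧
    (∀ x, shiftComp (n+1) T (k+1) x =
      (List.ofFn (fun i : Fin n => T (i.castSucc - k))).foldl (fun y f => f y) (T (0 - (k+1)) x)) := by
  have hlast : (Fin.last n : Fin (n+1)) - k = 0 - (k+1) := by
    have h : Fin.last n = 0 - 1 := by
      have := Fin.last_add_one n
      rw [eq_sub_iff_add_eq, this]
    rw [h]; ring
  constructor
  · intro x
    simp only [shiftComp, compSeq]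
    rw [List.ofFn_succ' (fun j : Fin (n+1) => T (j - k)), List.concat_eq_append,
      List.foldl_append]
    simp only [List.foldl_cons, List.foldl_nil, hlast]
  · intro x
    simp only [shiftComp, compSeq]
    rw [List.ofFn_succ (f := fun j : Fin (n+1) => T (j - (k+1)))]
    simp only [List.foldl_cons]
    have hi : ∀ i : Fin n, (Fin.succ i : Fin (n+1)) - (k+1) = i.castSucc - k := by
      intro i; rw [← Fin.coeSucc_eq_succ]; ring
    congr 1
    · congr 1
      funext i
      rw [hi i]

/-- Minty-type theorem: the closure of the range of `Id - S` is convex for `S`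
nonexpansive on a real Hilbert space. -/
lemma minty {X : Type*} [NormedAddCommGroup X] [InnerProductSpace ℝ X] [CompleteSpace X]
    (S : X → X) (hS : ∀ x y : X, ‖S x - S y‖ ≤ ‖x - y‖) :
    Convex ℝ (closure (Set.range (fun x => x - S x))) := by
  have mono : ∀ x y : X, 0 ≤ (inner ℝ (x - y) ((x - S x) - (y - S y)) : ℝ) := by
    intro x y
    have h1 : (inner ℝ (x - y) ((x - S x) - (y - S y)) : ℝ)
        = ‖x - y‖^2 - inner ℝ (x - y) (S x - S y) := by
      rw [show (x - S x) - (y - S y) = (x - y) - (S x - S y) by abel,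
        inner_sub_right, real_inner_self_eq_norm_sq]
    have h2 := real_inner_le_norm (x - y) (S x - S y)
    have h3 := hS x y
    nlinarith [norm_nonneg (x - y)]
  have solve : ∀ ε : ℝ, 0 < ε → ∀ c : X, ∃ x : X, x - S x + ε • x = c := by
    intro ε hε c
    have h1ε : (0:ℝ) < 1 + ε := by linarith
    set K : NNReal := ⟨(1+ε)⁻¹, by positivity⟩ with hKdef
    have hlip : LipschitzWith K (fun x => (1+ε)⁻¹ • (S x + c)) := by
      apply LipschitzWith.of_dist_le_mul
      intro x y
      simp only [dist_eq_norm]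
      rw [← smul_sub, show S x + c - (S y + c) = S x - S y by abel, norm_smul,
        Real.norm_eq_abs, abs_of_pos (by positivity)]
      exact mul_le_mul_of_nonneg_left (hS x y) (by positivity)
    have hcontr : ContractingWith K (fun x => (1+ε)⁻¹ • (S x + c)) := by
      refine ⟨?_, hlip⟩
      rw [← NNReal.coe_lt_coe]
      show (1+ε)⁻¹ < 1
      rw [inv_lt_one_iff₀]
      right; linarith
    obtain ⟨x, hx, -⟩ := hcontr.exists_fixedPoint 0 (edist_ne_top _ _)
    have h2 : (1+ε) • x = S x + c := by
      conv_lhs => rw [← hx]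
      rw [smul_smul, mul_inv_cancel₀ (ne_of_gt h1ε), one_smul]
    refine ⟨x, ?_⟩
    have h3 : x + ε • x = S x + c := by rw [← h2, add_smul, one_smul]
    rw [show x - S x + ε • x = (x + ε • x) - S x by abel, h3]
    abel
  intro a ha b hb ta tb hta htb htab
  have htb' : tb = 1 - ta := by linarith
  subst htb'
  rw [Metric.mem_closure_iff]
  intro η hη
  rw [Metric.mem_closure_iff] at ha hb
  obtain ⟨a', ha', haa'⟩ := ha (η/3) (by linarith)
  obtain ⟨b', hb', hbb'⟩ := hb (η/3) (by linarith)
  obtain ⟨xb, hxb⟩ := ha'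
  obtain ⟨yb, hyb⟩ := hb'
  have hxb' : xb - S xb = a' := hxb
  have hyb' : yb - S yb = b' := hyb
  subst hxb' hyb'
  set c : X := ta • a + (1-ta) • b with hc
  set q : X := ta • xb + (1-ta) • yb with hq
  set D : ℝ := ta * inner ℝ xb (xb - S xb) + (1-ta) * inner ℝ yb (yb - S yb) - inner ℝ q c with hD
  have hqpos : (0:ℝ) < ‖q‖ + 1 := by positivity
  have hDpos : (0:ℝ) < |D| + 1 := by positivity
  set ε : ℝ := min (η/(3*(‖q‖+1))) ((η/3)^2/(|D|+1)) with hε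
  have hεpos : 0 < ε := by
    apply lt_min
    · positivity
    · positivity
  obtain ⟨x, hx⟩ := solve ε hεpos c
  refine ⟨x - S x, Set.mem_range_self x, ?_⟩
  have hw : x - S x = c - ε • x := by rw [← hx]; abel
  have hcc' : ‖c - (ta • (xb - S xb) + (1-ta) • (yb - S yb))‖ ≤ η/3 := by
    have h1 : c - (ta • (xb - S xb) + (1-ta) • (yb - S yb))
        = ta • (a - (xb - S xb)) + (1-ta) • (b - (yb - S yb)) := by
      rw [hc]; module
    rw [h1]
    calc ‖ta • (a - (xb - S xb)) + (1-ta) • (b - (yb - S yb))‖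
        ≤ ‖ta • (a - (xb - S xb))‖ + ‖(1-ta) • (b - (yb - S yb))‖ := norm_add_le _ _
      _ = ta * ‖a - (xb - S xb)‖ + (1-ta) * ‖b - (yb - S yb)‖ := by
          rw [norm_smul, norm_smul, Real.norm_eq_abs, Real.norm_eq_abs,
            abs_of_nonneg hta, abs_of_nonneg (by linarith)]
      _ ≤ ta * (η/3) + (1-ta) * (η/3) := by
          rw [dist_eq_norm] at haa' hbb'
          have h2 := mul_le_mul_of_nonneg_left haa'.le hta
          have h3 := mul_le_mul_of_nonneg_left hbb'.le (show (0:ℝ) ≤ 1 - ta by linarith)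
          linarith
      _ = η/3 := by ring
  have hmain : ε * ‖x‖^2 ≤ ‖x‖ * (η/3) + ε * (‖q‖ * ‖x‖) + D := by
    have e1 := mono x xb
    have e2 := mono x yb
    rw [hw] at e1 e2
    have hsum : 0 ≤ ta * (inner ℝ (x - xb) ((c - ε • x) - (xb - S xb)) : ℝ)
        + (1-ta) * (inner ℝ (x - yb) ((c - ε • x) - (yb - S yb)) : ℝ) :=
      add_nonneg (mul_nonneg hta e1) (mul_nonneg (by linarith) e2)
    have hident : ta * (inner ℝ (x - xb) ((c - ε • x) - (xb - S xb)) : ℝ)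
        + (1-ta) * (inner ℝ (x - yb) ((c - ε • x) - (yb - S yb)) : ℝ)
        = (inner ℝ x (c - (ta • (xb - S xb) + (1-ta) • (yb - S yb))) : ℝ)
          - ε * inner ℝ x x + ε * inner ℝ q x + D := by
      simp only [hD, hq, inner_sub_left, inner_sub_right, inner_add_left, inner_add_right,
        real_inner_smul_left, real_inner_smul_right]
      ring_nf
    rw [hident] at hsum
    have hCS1 : (inner ℝ x (c - (ta • (xb - S xb) + (1-ta) • (yb - S yb))) : ℝ) ≤ ‖x‖ * (η/3) :=
      (real_inner_le_norm _ _).trans (mul_le_mul_of_nonneg_left hcc' (norm_nonneg x))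
    have hCS2 : ε * (inner ℝ q x : ℝ) ≤ ε * (‖q‖ * ‖x‖) :=
      mul_le_mul_of_nonneg_left (real_inner_le_norm q x) hεpos.le
    have hx2 : (inner ℝ x x : ℝ) = ‖x‖^2 := real_inner_self_eq_norm_sq x
    rw [hx2] at hsum
    linarith
  have hεq : ε * ‖q‖ ≤ η/3 := by
    have h1 : ε ≤ η/(3*(‖q‖+1)) := min_le_left _ _
    have h2 : ε * (3*(‖q‖+1)) ≤ η := (le_div_iff₀ (by positivity)).mp h1
    nlinarith [hεpos, norm_nonneg q]
  have hεD : ε * D ≤ (η/3)^2 := by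
    have h1 : ε ≤ (η/3)^2/(|D|+1) := min_le_right _ _
    have h2 : ε * (|D|+1) ≤ (η/3)^2 := (le_div_iff₀ hDpos).mp h1
    have h3 : ε * D ≤ ε * |D| := mul_le_mul_of_nonneg_left (le_abs_self D) hεpos.le
    nlinarith [hεpos]
  rw [dist_eq_norm, show c - (x - S x) = ε • x from by rw [hw]; abel, norm_smul,
    Real.norm_eq_abs, abs_of_pos hεpos]
  by_contra hcon
  push_neg at hcon
  have hρ : 0 ≤ ε * ‖x‖ := mul_nonneg hεpos.le (norm_nonneg x)
  nlinarith [mul_le_mul_of_nonneg_left hmain hεpos.le,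
    mul_le_mul_of_nonneg_right hεq hρ, hεD,
    mul_le_mul_of_nonneg_right hcon hρ,
    mul_le_mul_of_nonneg_left hcon (by positivity : (0:ℝ) ≤ η/3),
    mul_pos hη hη, hη]

theorem stmt_6 {X : Type*} [NormedAddCommGroup X] [InnerProductSpace ℝ X] [CompleteSpace X]
    (m : ℕ) (hm : 2 ≤ m) (T : Fin m → X → X)
    (hT : ∀ i, ∀ x y : X, ‖T i x - T i y‖ ^ 2 ≤ (inner ℝ (x - y) (T i x - T i y) : ℝ))
    (u : Fin m → X)
    (hu : ∀ k, u k ∈ closure (Set.range (fun x => x - shiftComp m T k x)))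
    (humin : ∀ k, ∀ w ∈ closure (Set.range (fun x => x - shiftComp m T k x)), ‖u k‖ ≤ ‖w‖) :
    ∀ k l : Fin m, u k = u l := by
  obtain ⟨n, rfl⟩ : ∃ n, m = n + 1 := ⟨m - 1, by omega⟩
  -- nonexpansiveness of the shifted compositions
  have hnonexp : ∀ k : Fin (n+1), ∀ x y : X,
      ‖shiftComp (n+1) T k x - shiftComp (n+1) T k y‖ ≤ ‖x - y‖ := by
    intro k x y
    simp only [shiftComp, compSeq]
    refine foldl_nonexp _ ?_ x y
    intro f hf
    rw [List.mem_ofFn] at hf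
    obtain ⟨i, rfl⟩ := hf
    exact firm_nonexp _ (hT _)
  -- key transfer step between consecutive shifts
  have hstep : ∀ (k : Fin (n+1)) (z : X),
      ∃ g ∈ Set.range (fun x => x - shiftComp (n+1) T k x),
        ‖g‖ ≤ ‖z - shiftComp (n+1) T (k+1) z‖ ∧
        ‖g - (z - shiftComp (n+1) T (k+1) z)‖^2
          ≤ ‖z - shiftComp (n+1) T (k+1) z‖^2 - ‖g‖^2 := by
    intro k z
    obtain ⟨hd1, hd2⟩ := shiftComp_decomp n T k
    set B : X → X := T (0 - (k+1)) with hB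
    refine ⟨B z - shiftComp (n+1) T k (B z), ⟨B z, rfl⟩, ?_⟩
    have hkey : shiftComp (n+1) T k (B z) = B (shiftComp (n+1) T (k+1) z) := by
      rw [hd1 (B z), hd2 z]
    set f := z - shiftComp (n+1) T (k+1) z with hf
    set g := B z - shiftComp (n+1) T k (B z) with hg
    have hfirm : ‖g‖^2 ≤ (inner ℝ f g : ℝ) := by
      rw [hg, hkey, hf]
      exact hT (0 - (k+1)) z (shiftComp (n+1) T (k+1) z)
    have hCS := real_inner_le_norm f g
    constructor
    · by_contra hcn
      push_neg at hcn
      nlinarith [norm_nonneg g, norm_nonneg f]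
    · have hns : ‖g - f‖^2 = ‖g‖^2 - 2*(inner ℝ g f : ℝ) + ‖f‖^2 := norm_sub_sq_real g f
      nlinarith [hns, hfirm, hCS, real_inner_comm g f]
  -- norms of the u k are cyclically monotone, hence all equal
  have hle : ∀ k : Fin (n+1), ‖u k‖ ≤ ‖u (k+1)‖ := by
    intro k
    have hsub : closure (Set.range (fun x => x - shiftComp (n+1) T (k+1) x))
        ⊆ {w : X | ‖u k‖ ≤ ‖w‖} := by
      apply closure_minimal
      · rintro w ⟨z, rfl⟩
        obtain ⟨g, hgm, hgle, -⟩ := hstep k z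
        exact (humin k g (subset_closure hgm)).trans hgle
      · exact isClosed_le continuous_const continuous_norm
    exact hsub (hu (k+1))
  have hchain : ∀ (j : ℕ) (k : Fin (n+1)), ‖u k‖ ≤ ‖u (k + (j : Fin (n+1)))‖ := by
    intro j
    induction j with
    | zero => intro k; simp
    | succ j ih =>
      intro k
      have h1 : (k + ((j+1 : ℕ) : Fin (n+1))) = (k + ((j : ℕ) : Fin (n+1))) + 1 := by
        push_cast
        ring
      rw [h1]
      exact (ih k).trans (hle _)
  have hnorm : ∀ k : Fin (n+1), ‖u (k+1)‖ = ‖u k‖ := by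
    intro k
    refine le_antisymm ?_ (hle k)
    have h0 : ((n : ℕ) : Fin (n+1)) + 1 = 0 := by
      rw [← Nat.cast_add_one]
      exact Fin.natCast_self (n+1)
    have h1 : (k + 1) + ((n : ℕ) : Fin (n+1)) = k := by
      linear_combination h0
    have h2 := hchain n (k+1)
    rw [h1] at h2
    exact h2
  -- consecutive u's are equal
  have hsucc : ∀ k : Fin (n+1), u (k+1) = u k := by
    intro k
    have hμ1 : ‖u (k+1)‖ = ‖u k‖ := hnorm k
    have hμ0 : (0:ℝ) ≤ ‖u k‖ := norm_nonneg _
    -- u (k+1) lies in the closure of the range of Id - S_k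
    have hmem : u (k+1) ∈ closure (Set.range (fun x => x - shiftComp (n+1) T k x)) := by
      rw [Metric.mem_closure_iff]
      intro η hη
      set μ : ℝ := ‖u k‖ with hμdef
      set δ : ℝ := min (η/2) (min 1 (η^2/(4*(2*μ+1)))) with hδdef
      have hδpos : 0 < δ := by
        apply lt_min (by linarith)
        apply lt_min one_pos
        positivity
      have hδ1 : δ ≤ η/2 := min_le_left _ _
      have hδ2 : δ ≤ 1 := (min_le_right _ _).trans (min_le_left _ _)
      have hδ3 : δ ≤ η^2/(4*(2*μ+1)) := (min_le_right _ _).trans (min_le_right _ _)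
      have h1 := hu (k+1)
      rw [Metric.mem_closure_iff] at h1
      obtain ⟨w, hwm, hwd⟩ := h1 δ hδpos
      obtain ⟨z, hz⟩ := hwm
      have hz' : z - shiftComp (n+1) T (k+1) z = w := hz
      subst hz'
      obtain ⟨g, hgm, hgle, hgsq⟩ := hstep k z
      refine ⟨g, hgm, ?_⟩
      set f := z - shiftComp (n+1) T (k+1) z with hfdef
      have hfd : ‖u (k+1) - f‖ < δ := by rw [← dist_eq_norm]; exact hwd
      have hfn : ‖f‖ ≤ μ + δ := by
        have h2 := norm_sub_norm_le f (u (k+1))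
        rw [norm_sub_rev f (u (k+1)), hμ1] at h2
        linarith
      have hgμ : μ ≤ ‖g‖ := humin k g (subset_closure hgm)
      have hsq : ‖g - f‖^2 ≤ η^2/4 := by
        have h2 : ‖f‖^2 ≤ (μ+δ)^2 := by nlinarith [norm_nonneg f]
        have h3 : ‖g - f‖^2 ≤ (μ+δ)^2 - μ^2 := by nlinarith [hgsq]
        have h4 : 0 < 2*μ+1 := by linarith
        have h5 : (2*μ+1) * δ ≤ (2*μ+1) * (η^2/(4*(2*μ+1))) :=
          mul_le_mul_of_nonneg_left hδ3 h4.le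
        have h6 : (2*μ+1) * (η^2/(4*(2*μ+1))) = η^2/4 := by field_simp
        nlinarith [hδpos]
      have hgf : ‖g - f‖ ≤ η/2 := by nlinarith [norm_nonneg (g - f), hη]
      rw [dist_eq_norm]
      calc ‖u (k+1) - g‖ ≤ ‖u (k+1) - f‖ + ‖f - g‖ := norm_sub_le_norm_sub_add_norm_sub _ _ _
        _ < δ + η/2 := by
            have h7 : ‖f - g‖ = ‖g - f‖ := norm_sub_rev f g
            linarith
        _ ≤ η := by linarith
    -- uniqueness of the minimum-norm element via convexity
    have hconv := minty (shiftComp (n+1) T k) (hnonexp k)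
    have hmid : (1/2 : ℝ) • u k + (1/2 : ℝ) • u (k+1)
        ∈ closure (Set.range (fun x => x - shiftComp (n+1) T k x)) :=
      hconv (hu k) hmem (by norm_num) (by norm_num) (by norm_num)
    have hminmid : ‖u k‖ ≤ ‖(1/2 : ℝ) • u k + (1/2 : ℝ) • u (k+1)‖ := humin k _ hmid
    have hpar : ‖u k + u (k+1)‖^2 + ‖u k - u (k+1)‖^2 = 2*‖u k‖^2 + 2*‖u (k+1)‖^2 := by
      have h1 := norm_add_sq_real (u k) (u (k+1))
      have h2 := norm_sub_sq_real (u k) (u (k+1))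
      linarith
    have hhalf : ‖(1/2 : ℝ) • u k + (1/2 : ℝ) • u (k+1)‖ = (1/2) * ‖u k + u (k+1)‖ := by
      rw [← smul_add, norm_smul, Real.norm_eq_abs]
      norm_num
    rw [hhalf] at hminmid
    have hd0 : ‖u k - u (k+1)‖^2 ≤ 0 := by
      nlinarith [hμ1, norm_nonneg (u k + u (k+1)), hμ0]
    have hn : ‖u k - u (k+1)‖ = 0 := by
      have := norm_nonneg (u k - u (k+1))
      nlinarith
    have := sub_eq_zero.mp (norm_eq_zero.mp hn)
    exact this.symm
  -- conclude
  have hzero : ∀ k : Fin (n+1), u k = u 0 := by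
    have key : ∀ (j : ℕ) (hj : j < n+1), u ⟨j, hj⟩ = u 0 := by
      intro j
      induction j with
      | zero => intro hj; rfl
      | succ j ih =>
        intro hj
        have hj' : j < n+1 := by omega
        have hval : ((⟨j, hj'⟩ : Fin (n+1)) + 1).val = j + 1 := by
          rw [Fin.val_add, Fin.val_one', Nat.mod_eq_of_lt (show 1 < n+1 by omega),
            Nat.mod_eq_of_lt hj]
        have hk1 : (⟨j+1, hj⟩ : Fin (n+1)) = (⟨j, hj'⟩ : Fin (n+1)) + 1 := by
          apply Fin.ext
          rw [hval]
        rw [hk1, hsucc]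
        exact ih hj'
    intro k
    have : k = ⟨k.val, k.isLt⟩ := rfl
    rw [this]
    exact key k.val k.isLt
  intro k l
  rw [hzero k, hzero l]
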